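/- arXiv:1505.04304 — 2 statements merged into one kernel-verified Lean document; each statement's English description precedes it below -/
import Mathlib

section
/- If A is a summand-ideal of the pseudo MV-algebra M = Γ(G,u), then for each x ∈ M there exist unique elements a ∈ A and b ∈ A^⊥ such that x = a ⊕ b. -/
variable {G : Type*} [Lattice G] [AddGroup G]
  [CovariantClass G G (· + ·) (· ≤ ·)]
  [CovariantClass G G (Function.swap (· + ·)) (· ≤ ·)]

/-- `u` is a strong unit of the lattice-ordered group `G`. -/
def IsStrongUnit (u : G) : Prop := 0 ≤ u ∧ ∀ x : G, ∃ n : ℕ, x ≤ n • u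

/-- The operation `x ⊕ y := (x + y) ⊓ u` of the pseudo MV-algebra `Γ(G,u)`. -/
def oplus (u x y : G) : G := (x + y) ⊓ u

/-- The operation `x ⊙ y := (x - u + y) ⊔ 0` of the pseudo MV-algebra `Γ(G,u)`. -/
def odot (u x y : G) : G := (x - u + y) ⊔ 0

/-- `n.x := x ⊕ ⋯ ⊕ x` (`n` summands), with `0.x = 0`. -/
def nOplus (u : G) : ℕ → G → G
  | 0, _ => 0
  | n + 1, x => oplus u (nOplus u n x) x

/-- `I` is an ideal of the pseudo MV-algebra with carrier `C ⊆ Γ(G,u)`: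
a nonempty subset of `C`, downward closed within `C`, and closed under `⊕`. -/
def IsIdealIn (u : G) (C I : Set G) : Prop :=
  I ⊆ C ∧ I.Nonempty ∧ (∀ x ∈ I, ∀ y ∈ C, y ≤ x → y ∈ I) ∧
    ∀ x ∈ I, ∀ y ∈ I, oplus u x y ∈ I

/-- `I` is a normal ideal: `x ⊕ I = I ⊕ x` for all `x ∈ C`. -/
def IsNormalIdealIn (u : G) (C I : Set G) : Prop :=
  IsIdealIn u C I ∧ ∀ x ∈ C, (fun i => oplus u x i) '' I = (fun i => oplus u i x) '' I

/-- `⟨X⟩_n`, the smallest normal ideal (of the carrier `C`) containing `X`. -/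
def normalGenIn (u : G) (C X : Set G) : Set G :=
  ⋂₀ {I | IsNormalIdealIn u C I ∧ X ⊆ I}

/-- The polar `X^⊥ = {y ∈ C : y ∧ x = 0 for all x ∈ X}` computed in carrier `C`. -/
def polarIn (C X : Set G) : Set G := {y ∈ C | ∀ x ∈ X, y ⊓ x = 0}

/-- `A ⊕ B := {a ⊕ b : a ∈ A, b ∈ B}`. -/
def setOplus (u : G) (A B : Set G) : Set G := Set.image2 (oplus u) A B

/-- `↓a` computed within the carrier `C`. -/
def dsetIn (C : Set G) (a : G) : Set G := {x ∈ C | x ≤ a}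

/-- `I` is a summand-ideal of the carrier `C`: a normal ideal such that for
some normal ideal `J`, `I ∩ J = {0}` and `⟨I ∪ J⟩_n = C`. -/
def IsSummandIdealIn (u : G) (C I : Set G) : Prop :=
  IsNormalIdealIn u C I ∧ ∃ J, IsNormalIdealIn u C J ∧ I ∩ J = {0} ∧
    normalGenIn u C (I ∪ J) = C

/-- `I` is a polar ideal of the carrier `C`: `I = I^⊥⊥`. -/
def IsPolarIdealIn (C I : Set G) : Prop := polarIn C (polarIn C I) = I

/-- `a` is a Boolean element of the carrier `C`: `a ∈ C` and `a ⊕ a = a`. -/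
def IsBooleanIn (u : G) (C : Set G) (a : G) : Prop := a ∈ C ∧ oplus u a a = a

/-- The carrier `C` is strongly projectable: every polar ideal is a summand-ideal. -/
def IsStronglyProjectableIn (u : G) (C : Set G) : Prop :=
  ∀ I : Set G, IsPolarIdealIn C I → IsSummandIdealIn u C I

/-- `N` is a subalgebra of `Γ(G,u)`: contains `0` and `u`, closed under `⊕`,
`x⁻ = u - x` and `x∼ = -x + u`. -/
def IsSubalg (u : G) (N : Set G) : Prop :=
  N ⊆ Set.Icc 0 u ∧ 0 ∈ N ∧ u ∈ N ∧
    (∀ x ∈ N, ∀ y ∈ N, oplus u x y ∈ N) ∧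
    (∀ x ∈ N, u - x ∈ N) ∧ (∀ x ∈ N, -x + u ∈ N)

/-- `N` is a large subalgebra of `Γ(G,u)`: for every nonzero `y ∈ Γ(G,u)` there
are `n ∈ ℕ` and a nonzero `x ∈ N` with `x ≤ n.y`. -/
def IsLargeSubalg (u : G) (N : Set G) : Prop :=
  IsSubalg u N ∧ ∀ y ∈ Set.Icc (0 : G) u, y ≠ 0 →
    ∃ n : ℕ, ∃ x ∈ N, x ≠ 0 ∧ x ≤ nOplus u n y

section StmtSevenAux

variable {u : G}

private lemma aux_add_eq_sup {a b : G} (h : a ⊓ b = 0) : a + b = a ⊔ b := by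
  have key : a + -(a ⊓ b) + b = b ⊔ a := by
    rw [neg_inf, add_sup, sup_add]; simp
  rw [h, neg_zero, add_zero] at key
  rw [key, sup_comm]

private lemma aux_add_comm {a b : G} (h : a ⊓ b = 0) : a + b = b + a := by
  rw [aux_add_eq_sup h, aux_add_eq_sup (by rw [inf_comm]; exact h), sup_comm]

private lemma aux_foldl (w : G) {z : G} (hz : 0 ≤ z) : (w ⊓ u + z) ⊓ u = (w + z) ⊓ u := by
  rw [inf_add, inf_assoc, inf_eq_right.mpr (le_add_of_nonneg_right hz)]

private lemma aux_foldr {w : G} (z : G) (hw : 0 ≤ w) : (w + z ⊓ u) ⊓ u = (w + z) ⊓ u := by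
  rw [add_inf, inf_assoc, inf_eq_right.mpr (le_add_of_nonneg_left hw)]

private lemma aux_distrib {y a b : G} (hy : 0 ≤ y) (ha : 0 ≤ a) (hb : 0 ≤ b)
    (hab : a ⊓ b = 0) : y ⊓ (a ⊔ b) = (y ⊓ a) ⊔ (y ⊓ b) := by
  apply le_antisymm
  · set z := y ⊓ (a ⊔ b) with hzdef
    have hz0 : 0 ≤ z := le_inf hy (le_trans ha le_sup_left)
    have hzy : z ≤ y := inf_le_left
    have hzab : z ≤ a + b := by rw [aux_add_eq_sup hab]; exact inf_le_right
    have hsplit : z = z ⊓ a + (0 ⊔ (-a + z)) := by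
      have h1 : -(z ⊓ a) + z = 0 ⊔ (-a + z) := by
        rw [neg_inf, sup_add]; simp
      rw [← h1, add_neg_cancel_left]
    have h2 : 0 ⊔ (-a + z) ≤ z ⊓ b := by
      refine le_inf (sup_le hz0 ?_) (sup_le hb ?_)
      · simpa using add_le_add_right (neg_nonpos.mpr ha) z
      · calc -a + z ≤ -a + (a + b) := add_le_add_right hzab _
          _ = b := neg_add_cancel_left _ _
    have hdisj : (z ⊓ a) ⊓ (z ⊓ b) = 0 :=
      le_antisymm (le_trans (inf_le_inf inf_le_right inf_le_right) hab.le)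
        (le_inf (le_inf hz0 ha) (le_inf hz0 hb))
    calc z = z ⊓ a + (0 ⊔ (-a + z)) := hsplit
      _ ≤ z ⊓ a + z ⊓ b := add_le_add_right h2 _
      _ = z ⊓ a ⊔ z ⊓ b := aux_add_eq_sup hdisj
      _ ≤ y ⊓ a ⊔ y ⊓ b := sup_le_sup (inf_le_inf_right _ hzy) (inf_le_inf_right _ hzy)
  · exact sup_le (le_inf inf_le_left (le_trans inf_le_right le_sup_left))
      (le_inf inf_le_left (le_trans inf_le_right le_sup_right))

end StmtSevenAux

theorem stmt7 (u : G) (hu : IsStrongUnit u) (A : Set G)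
    (hA : IsSummandIdealIn u (Set.Icc (0 : G) u) A) :
    ∀ x ∈ Set.Icc (0 : G) u, ∃! p : G × G,
      p.1 ∈ A ∧ p.2 ∈ polarIn (Set.Icc (0 : G) u) A ∧ x = oplus u p.1 p.2 := by
  obtain ⟨hu0, -⟩ := hu
  obtain ⟨hAn, J, hJn, hAJ, hgen⟩ := hA
  have hAI := hAn.1
  have hJI := hJn.1
  have hAC : ∀ a ∈ A, 0 ≤ a ∧ a ≤ u := fun a ha => ⟨(hAI.1 ha).1, (hAI.1 ha).2⟩
  have hJC : ∀ j ∈ J, 0 ≤ j ∧ j ≤ u := fun j hj => ⟨(hJI.1 hj).1, (hJI.1 hj).2⟩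
  have hAdc := hAI.2.2.1
  have hJdc := hJI.2.2.1
  -- disjointness of A and J
  have hdisj : ∀ a ∈ A, ∀ j ∈ J, a ⊓ j = 0 := by
    intro a ha j hj
    have h1 : a ⊓ j ∈ A := hAdc a ha (a ⊓ j)
      ⟨le_inf (hAC a ha).1 (hJC j hj).1, le_trans inf_le_left (hAC a ha).2⟩ inf_le_left
    have h2 : a ⊓ j ∈ J := hJdc j hj (a ⊓ j)
      ⟨le_inf (hAC a ha).1 (hJC j hj).1, le_trans inf_le_left (hAC a ha).2⟩ inf_le_right
    have h3 : a ⊓ j ∈ A ∩ J := ⟨h1, h2⟩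
    rw [hAJ] at h3
    exact h3
  have hsum : ∀ a ∈ A, ∀ j ∈ J, a + j = a ⊔ j :=
    fun a ha j hj => aux_add_eq_sup (hdisj a ha j hj)
  have h0A : (0 : G) ∈ A := by
    obtain ⟨a, ha⟩ := hAI.2.1
    exact hAdc a ha 0 ⟨le_refl 0, hu0⟩ (hAC a ha).1
  have h0J : (0 : G) ∈ J := by
    obtain ⟨j, hj⟩ := hJI.2.1
    exact hJdc j hj 0 ⟨le_refl 0, hu0⟩ (hJC j hj).1
  have hJpol : ∀ j ∈ J, j ∈ polarIn (Set.Icc (0 : G) u) A := by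
    intro j hj
    exact ⟨hJI.1 hj, fun a ha => by rw [inf_comm]; exact hdisj a ha j hj⟩
  -- the candidate summand set
  set D : Set G := {z | ∃ a ∈ A, ∃ j ∈ J, z = a ⊔ j} with hDdef
  have hsupu : ∀ a ∈ A, ∀ j ∈ J, (a + j) ⊓ u = a ⊔ j := by
    intro a ha j hj
    rw [hsum a ha j hj]
    exact inf_eq_left.mpr (sup_le (hAC a ha).2 (hJC j hj).2)
  have hDC : D ⊆ Set.Icc (0 : G) u := by
    rintro z ⟨a, ha, j, hj, rfl⟩
    exact ⟨le_trans (hAC a ha).1 le_sup_left, sup_le (hAC a ha).2 (hJC j hj).2⟩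
  have hDdown : ∀ z ∈ D, ∀ y ∈ Set.Icc (0 : G) u, y ≤ z → y ∈ D := by
    rintro z ⟨a, ha, j, hj, rfl⟩ y hy hyz
    refine ⟨y ⊓ a, hAdc a ha _
        ⟨le_inf hy.1 (hAC a ha).1, le_trans inf_le_right (hAC a ha).2⟩ inf_le_right,
      y ⊓ j, hJdc j hj _
        ⟨le_inf hy.1 (hJC j hj).1, le_trans inf_le_right (hJC j hj).2⟩ inf_le_right, ?_⟩
    rw [← aux_distrib hy.1 (hAC a ha).1 (hJC j hj).1 (hdisj a ha j hj)]
    exact (inf_eq_left.mpr hyz).symm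
  have hDoplus : ∀ z1 ∈ D, ∀ z2 ∈ D, oplus u z1 z2 ∈ D := by
    rintro z1 ⟨a, ha, j, hj, rfl⟩ z2 ⟨a', ha', j', hj', rfl⟩
    have haa' : (a + a') ⊓ u ∈ A := hAI.2.2.2 a ha a' ha'
    have hjj' : (j + j') ⊓ u ∈ J := hJI.2.2.2 j hj j' hj'
    refine ⟨_, haa', _, hjj', ?_⟩
    show ((a ⊔ j) + (a' ⊔ j')) ⊓ u = ((a + a') ⊓ u) ⊔ ((j + j') ⊓ u)
    have hc : j + a' = a' + j := by
      rw [aux_add_comm (by rw [inf_comm]; exact hdisj a' ha' j hj)]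
    have e1 : (a ⊔ j) + (a' ⊔ j') = a + a' + (j + j') := by
      rw [← hsum a ha j hj, ← hsum a' ha' j' hj', add_assoc a j, ← add_assoc j a' j',
        hc, add_assoc a' j j', ← add_assoc a a']
    have h0aa : (0 : G) ≤ (a + a') ⊓ u :=
      le_inf (add_nonneg (hAC a ha).1 (hAC a' ha').1) hu0
    calc ((a ⊔ j) + (a' ⊔ j')) ⊓ u = (a + a' + (j + j')) ⊓ u := by rw [e1]
      _ = ((a + a') ⊓ u + (j + j')) ⊓ u :=
          (aux_foldl _ (add_nonneg (hJC j hj).1 (hJC j' hj').1)).symm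
      _ = ((a + a') ⊓ u + (j + j') ⊓ u) ⊓ u := (aux_foldr _ h0aa).symm
      _ = ((a + a') ⊓ u ⊔ (j + j') ⊓ u) ⊓ u := by
          rw [aux_add_eq_sup (hdisj _ haa' _ hjj')]
      _ = ((a + a') ⊓ u) ⊔ ((j + j') ⊓ u) :=
          inf_eq_left.mpr (sup_le inf_le_right inf_le_right)
  have hDnormal : ∀ x ∈ Set.Icc (0 : G) u,
      (fun i => oplus u x i) '' D = (fun i => oplus u i x) '' D := by
    intro x hx
    apply Set.Subset.antisymm
    · rintro _ ⟨_, ⟨a, ha, j, hj, rfl⟩, rfl⟩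
      have h1 : oplus u x a ∈ (fun i => oplus u i x) '' A := by
        rw [← hAn.2 x hx]; exact ⟨a, ha, rfl⟩
      obtain ⟨a', ha', hax⟩ := h1
      have h2 : oplus u x j ∈ (fun i => oplus u i x) '' J := by
        rw [← hJn.2 x hx]; exact ⟨j, hj, rfl⟩
      obtain ⟨j', hj', hjx⟩ := h2
      simp only [oplus] at hax hjx
      refine ⟨a' ⊔ j', ⟨a', ha', j', hj', rfl⟩, ?_⟩
      show ((a' ⊔ j') + x) ⊓ u = (x + (a ⊔ j)) ⊓ u
      calc ((a' ⊔ j') + x) ⊓ u = ((a' + j') ⊓ u + x) ⊓ u := by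
            rw [hsupu a' ha' j' hj']
        _ = (a' + j' + x) ⊓ u := aux_foldl _ hx.1
        _ = (a' + (j' + x)) ⊓ u := by rw [add_assoc]
        _ = (a' + (j' + x) ⊓ u) ⊓ u := (aux_foldr _ (hAC a' ha').1).symm
        _ = (a' + (x + j) ⊓ u) ⊓ u := by rw [hjx]
        _ = (a' + (x + j)) ⊓ u := aux_foldr _ (hAC a' ha').1
        _ = (a' + x + j) ⊓ u := by rw [add_assoc]
        _ = ((a' + x) ⊓ u + j) ⊓ u := (aux_foldl _ (hJC j hj).1).symm
        _ = ((x + a) ⊓ u + j) ⊓ u := by rw [hax]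
        _ = (x + a + j) ⊓ u := aux_foldl _ (hJC j hj).1
        _ = (x + (a + j)) ⊓ u := by rw [add_assoc]
        _ = (x + (a ⊔ j)) ⊓ u := by rw [hsum a ha j hj]
    · rintro _ ⟨_, ⟨a, ha, j, hj, rfl⟩, rfl⟩
      have h1 : oplus u a x ∈ (fun i => oplus u x i) '' A := by
        rw [hAn.2 x hx]; exact ⟨a, ha, rfl⟩
      obtain ⟨a', ha', hax⟩ := h1
      have h2 : oplus u j x ∈ (fun i => oplus u x i) '' J := by
        rw [hJn.2 x hx]; exact ⟨j, hj, rfl⟩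
      obtain ⟨j', hj', hjx⟩ := h2
      simp only [oplus] at hax hjx
      refine ⟨a' ⊔ j', ⟨a', ha', j', hj', rfl⟩, ?_⟩
      show (x + (a' ⊔ j')) ⊓ u = ((a ⊔ j) + x) ⊓ u
      calc (x + (a' ⊔ j')) ⊓ u = (x + (a' + j') ⊓ u) ⊓ u := by
            rw [hsupu a' ha' j' hj']
        _ = (x + (a' + j')) ⊓ u := aux_foldr _ hx.1
        _ = (x + a' + j') ⊓ u := by rw [add_assoc]
        _ = ((x + a') ⊓ u + j') ⊓ u := (aux_foldl _ (hJC j' hj').1).symm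
        _ = ((a + x) ⊓ u + j') ⊓ u := by rw [hax]
        _ = (a + x + j') ⊓ u := aux_foldl _ (hJC j' hj').1
        _ = (a + (x + j')) ⊓ u := by rw [add_assoc]
        _ = (a + (x + j') ⊓ u) ⊓ u := (aux_foldr _ (hAC a ha).1).symm
        _ = (a + (j + x) ⊓ u) ⊓ u := by rw [hjx]
        _ = (a + (j + x)) ⊓ u := aux_foldr _ (hAC a ha).1
        _ = (a + j + x) ⊓ u := by rw [add_assoc]
        _ = ((a ⊔ j) + x) ⊓ u := by rw [hsum a ha j hj]
  have hDsub : A ∪ J ⊆ D := by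
    rintro z (hz | hz)
    · exact ⟨z, hz, 0, h0J, (sup_eq_left.mpr (hAC z hz).1).symm⟩
    · exact ⟨0, h0A, z, hz, (sup_eq_right.mpr (hJC z hz).1).symm⟩
  have hDnorm : IsNormalIdealIn u (Set.Icc (0 : G) u) D :=
    ⟨⟨hDC, ⟨0, 0, h0A, 0, h0J, by simp⟩, hDdown, hDoplus⟩, hDnormal⟩
  have hCD : ∀ x ∈ Set.Icc (0 : G) u, x ∈ D := by
    intro x hx
    have hx' : x ∈ normalGenIn u (Set.Icc (0 : G) u) (A ∪ J) := by
      rw [hgen]; exact hx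
    exact Set.mem_sInter.mp hx' D ⟨hDnorm, hDsub⟩
  -- uniqueness core
  have key : ∀ a1 ∈ A, ∀ b1 ∈ polarIn (Set.Icc (0 : G) u) A,
      ∀ a2 ∈ A, ∀ b2 ∈ polarIn (Set.Icc (0 : G) u) A,
      oplus u a1 b1 = oplus u a2 b2 → a1 ≤ a2 ∧ b1 ≤ b2 := by
    intro a1 ha1 b1 hb1 a2 ha2 b2 hb2 heq
    have d1 : a1 ⊓ b1 = 0 := by rw [inf_comm]; exact hb1.2 a1 ha1
    have d2 : a2 ⊓ b2 = 0 := by rw [inf_comm]; exact hb2.2 a2 ha2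
    have e1 : oplus u a1 b1 = a1 ⊔ b1 := by
      show (a1 + b1) ⊓ u = a1 ⊔ b1
      rw [aux_add_eq_sup d1]
      exact inf_eq_left.mpr (sup_le (hAC a1 ha1).2 hb1.1.2)
    have e2 : oplus u a2 b2 = a2 ⊔ b2 := by
      show (a2 + b2) ⊓ u = a2 ⊔ b2
      rw [aux_add_eq_sup d2]
      exact inf_eq_left.mpr (sup_le (hAC a2 ha2).2 hb2.1.2)
    have hsupeq : a1 ⊔ b1 = a2 ⊔ b2 := by rw [← e1, heq, e2]
    constructor
    · have z12 : a1 ⊓ b2 = 0 := by rw [inf_comm]; exact hb2.2 a1 ha1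
      calc a1 = a1 ⊓ (a1 ⊔ b1) := (inf_eq_left.mpr le_sup_left).symm
        _ = a1 ⊓ (a2 ⊔ b2) := by rw [hsupeq]
        _ = (a1 ⊓ a2) ⊔ (a1 ⊓ b2) := aux_distrib (hAC a1 ha1).1 (hAC a2 ha2).1 hb2.1.1 d2
        _ = (a1 ⊓ a2) ⊔ 0 := by rw [z12]
        _ ≤ a2 := sup_le inf_le_right (hAC a2 ha2).1
    · have z21 : b1 ⊓ a2 = 0 := hb1.2 a2 ha2
      calc b1 = b1 ⊓ (a1 ⊔ b1) := (inf_eq_left.mpr le_sup_right).symm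
        _ = b1 ⊓ (a2 ⊔ b2) := by rw [hsupeq]
        _ = (b1 ⊓ a2) ⊔ (b1 ⊓ b2) := aux_distrib hb1.1.1 (hAC a2 ha2).1 hb2.1.1 d2
        _ = 0 ⊔ (b1 ⊓ b2) := by rw [z21]
        _ ≤ b2 := sup_le hb2.1.1 inf_le_right
  -- main statement
  intro x hx
  obtain ⟨a, ha, j, hj, hxe⟩ := hCD x hx
  have hxq : x = oplus u a j := by
    show x = (a + j) ⊓ u
    rw [hsupu a ha j hj]; exact hxe
  refine ⟨(a, j), ⟨ha, hJpol j hj, hxq⟩, ?_⟩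
  rintro ⟨a1, b1⟩ ⟨ha1, hb1, hx1⟩
  have heq : oplus u a1 b1 = oplus u a j := by rw [← hx1, hxq]
  obtain ⟨l1, l2⟩ := key a1 ha1 b1 hb1 a ha j (hJpol j hj) heq
  obtain ⟨r1, r2⟩ := key a ha j (hJpol j hj) a1 ha1 b1 hb1 heq.symm
  exact Prod.ext (le_antisymm l1 r1) (le_antisymm l2 r2)
end

section
/- A nonempty subset A of the pseudo MV-algebra M = Γ(G,u) is a summand-ideal of M if and only if A = ↓a for some Boolean element a ∈ M; in that case there is a unique Boolean element a ∈ A with A = ↓a, and A^⊥ = ↓a' where a' := u − a. -/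
set_option linter.unusedSectionVars false
set_option linter.unusedVariables false
set_option maxHeartbeats 1000000


variable {G : Type*} [Lattice G] [AddGroup G]
  [CovariantClass G G (· + ·) (· ≤ ·)]
  [CovariantClass G G (Function.swap (· + ·)) (· ≤ ·)]

lemma oplus_nonneg {u x y : G} (hu : 0 ≤ u) (hx : 0 ≤ x) (hy : 0 ≤ y) : 0 ≤ oplus u x y :=
  le_inf (add_nonneg hx hy) hu
lemma oplus_mem {u x y : G} (hu : 0 ≤ u) (hx : 0 ≤ x) (hy : 0 ≤ y) :
    oplus u x y ∈ Set.Icc (0:G) u := ⟨oplus_nonneg hu hx hy, inf_le_right⟩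
lemma oplus_mono {u x x' y y' : G} (h1 : x ≤ x') (h2 : y ≤ y') :
    oplus u x y ≤ oplus u x' y' := inf_le_inf (add_le_add h1 h2) le_rfl
lemma oplus_assoc1 {u p q r : G} (hr : 0 ≤ r) :
    oplus u (oplus u p q) r = (p + q + r) ⊓ u := by
  unfold oplus
  rw [inf_add, inf_assoc, inf_eq_right.mpr (le_add_of_nonneg_right hr)]
lemma oplus_assoc2 {u p q r : G} (hp : 0 ≤ p) :
    oplus u p (oplus u q r) = (p + q + r) ⊓ u := by
  unfold oplus
  rw [add_inf, ← add_assoc, inf_assoc, inf_eq_right.mpr (le_add_of_nonneg_left hp)]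
lemma comm_of_disjoint {s t : G} (h : s ⊓ t = 0) : s + t = t + s := by
  have h0 : (-s) ⊔ (-t) = (0:G) := by rw [← neg_inf, h, neg_zero]
  have e1 : s + ((-s) ⊔ (-t)) + t = t ⊔ s := by
    rw [add_sup, sup_add]; simp [add_assoc]
  have e2 : t + ((-s) ⊔ (-t)) + s = t ⊔ s := by
    rw [add_sup, sup_add]; simp [add_assoc]
  rw [h0] at e1 e2
  simp only [add_zero] at e1 e2
  exact e1.trans e2.symm

lemma img_left {u x a : G} (hx : x ∈ Set.Icc (0:G) u) (ha : a ∈ Set.Icc (0:G) u) :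
    (fun i => oplus u x i) '' (dsetIn (Set.Icc (0:G) u) a) = Set.Icc x (oplus u x a) := by
  ext w
  constructor
  · rintro ⟨i, ⟨⟨hi0, hiu⟩, hia⟩, rfl⟩
    exact ⟨le_inf (le_add_of_nonneg_right hi0) hx.2, oplus_mono le_rfl hia⟩
  · rintro ⟨hw1, hw2⟩
    have hwu : w ≤ u := hw2.trans inf_le_right
    have h0 : 0 ≤ -x + w := by simpa using add_le_add_left hw1 (-x)
    have h1 : -x + w ≤ a := by
      have := add_le_add_left (hw2.trans inf_le_left) (-x)
      simpa [← add_assoc] using this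
    refine ⟨-x + w, ⟨⟨h0, h1.trans ha.2⟩, h1⟩, ?_⟩
    show (x + (-x + w)) ⊓ u = w
    rw [add_neg_cancel_left]
    exact inf_eq_left.mpr hwu

lemma img_right {u x a : G} (hx : x ∈ Set.Icc (0:G) u) (ha : a ∈ Set.Icc (0:G) u) :
    (fun i => oplus u i x) '' (dsetIn (Set.Icc (0:G) u) a) = Set.Icc x (oplus u a x) := by
  ext w
  constructor
  · rintro ⟨i, ⟨⟨hi0, hiu⟩, hia⟩, rfl⟩
    exact ⟨le_inf (le_add_of_nonneg_left hi0) hx.2, oplus_mono hia le_rfl⟩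
  · rintro ⟨hw1, hw2⟩
    have hwu : w ≤ u := hw2.trans inf_le_right
    have h0 : 0 ≤ w - x := sub_nonneg.mpr hw1
    have h1 : w - x ≤ a := sub_le_iff_le_add.mpr (hw2.trans inf_le_left)
    refine ⟨w - x, ⟨⟨h0, h1.trans ha.2⟩, h1⟩, ?_⟩
    show (w - x + x) ⊓ u = w
    rw [sub_add_cancel]
    exact inf_eq_left.mpr hwu

lemma bool_b {u a : G} (hu : 0 ≤ u) (ha : a ∈ Set.Icc (0:G) u) (hb : oplus u a a = a) :
    a ⊓ (-a + u) = 0 ∧ a + (-a + u) = (-a + u) + a ∧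
      (-a + u) ∈ Set.Icc (0:G) u ∧ -a + u = u - a := by
  have h1 : a ⊓ (-a + u) = 0 := by
    have e : a + (a ⊓ (-a + u)) = a + 0 := by
      rw [add_inf, add_neg_cancel_left, add_zero]
      exact hb
    exact add_left_cancel e
  have h2 : a + (-a + u) = (-a + u) + a := comm_of_disjoint h1
  have hb0 : 0 ≤ -a + u := by simpa using add_le_add_left ha.2 (-a)
  have hbu : -a + u ≤ u := by simpa using add_le_add_right (neg_nonpos.mpr ha.1) u
  have h4 : -a + u = u - a := by
    have : (-a + u) + a = u := by rw [← h2, add_neg_cancel_left]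
    exact eq_sub_of_add_eq this
  exact ⟨h1, h2, ⟨hb0, hbu⟩, h4⟩

lemma bool_swap {u a x : G} (hu : 0 ≤ u) (ha : a ∈ Set.Icc (0:G) u) (hb : oplus u a a = a)
    (hx : x ∈ Set.Icc (0:G) u) : oplus u x a = oplus u a x := by
  obtain ⟨h1, h2, hbC, h4⟩ := bool_b hu ha hb
  set b := -a + u with hbdef
  have hu1 : u = a + b := (add_neg_cancel_left a u).symm
  have hu2 : u = b + a := by rw [hu1, h2]
  have hdisj : (x ⊓ b) ⊓ a = 0 := by
    refine le_antisymm ?_ (le_inf (le_inf hx.1 hbC.1) ha.1)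
    calc (x ⊓ b) ⊓ a ≤ b ⊓ a := inf_le_inf inf_le_right le_rfl
    _ = a ⊓ b := inf_comm b a
    _ = 0 := h1
  have e1 : oplus u x a = (x ⊓ b) + a := by
    show (x + a) ⊓ u = _
    rw [hu2, ← inf_add]
  have e2 : oplus u a x = a + (x ⊓ b) := by
    show (a + x) ⊓ u = _
    rw [hu1, ← add_inf]
  rw [e1, e2, comm_of_disjoint hdisj]

lemma boolean_normal {u a : G} (hu : 0 ≤ u) (ha : a ∈ Set.Icc (0:G) u)
    (hb : oplus u a a = a) :
    IsNormalIdealIn u (Set.Icc (0:G) u) (dsetIn (Set.Icc (0:G) u) a) := by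
  constructor
  · refine ⟨fun x hx => hx.1, ⟨0, ⟨le_rfl, hu⟩, ha.1⟩,
      fun x hx y hy hle => ⟨hy, hle.trans hx.2⟩, ?_⟩
    intro x hx y hy
    exact ⟨oplus_mem hu hx.1.1 hy.1.1, (oplus_mono hx.2 hy.2).trans_eq hb⟩
  · intro x hx
    rw [img_left hx ha, img_right hx ha, bool_swap hu ha hb hx]

lemma icc_normal {u : G} (hu : 0 ≤ u) :
    IsNormalIdealIn u (Set.Icc (0:G) u) (Set.Icc (0:G) u) := by
  have hC : dsetIn (Set.Icc (0:G) u) u = Set.Icc (0:G) u := by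
    ext z; exact ⟨fun h => h.1, fun h => ⟨h, h.2⟩⟩
  have hbu : oplus u u u = u := inf_eq_right.mpr (le_add_of_nonneg_left hu)
  have := boolean_normal hu ⟨hu, le_rfl⟩ hbu
  rwa [hC] at this

lemma polar_eq {u a : G} (hu : 0 ≤ u) (ha : a ∈ Set.Icc (0:G) u) (hb : oplus u a a = a) :
    polarIn (Set.Icc (0:G) u) (dsetIn (Set.Icc (0:G) u) a)
      = dsetIn (Set.Icc (0:G) u) (u - a) := by
  obtain ⟨h1, h2, hbC, h4⟩ := bool_b hu ha hb
  rw [← h4]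
  ext y
  constructor
  · rintro ⟨hyC, hy⟩
    have hya : y ⊓ a = 0 := hy a ⟨ha, le_rfl⟩
    refine ⟨hyC, ?_⟩
    have key : y = (-(y ⊓ a)) + y := by rw [hya, neg_zero, zero_add]
    have key2 : (-(y ⊓ a)) + y = 0 ⊔ (-a + y) := by
      rw [neg_inf, sup_add, neg_add_cancel]
    have hle : y ≤ 0 ⊔ (-a + y) := le_of_eq (key.trans key2)
    exact hle.trans (sup_le hbC.1 (add_le_add (le_refl (-a)) hyC.2))
  · rintro ⟨hyC, hy⟩
    refine ⟨hyC, fun x hx => le_antisymm ?_ (le_inf hyC.1 hx.1.1)⟩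
    calc y ⊓ x ≤ (-a + u) ⊓ a := inf_le_inf hy hx.2
    _ = a ⊓ (-a + u) := inf_comm _ _
    _ = 0 := h1

lemma bool_summand {u a : G} (hu : 0 ≤ u) (ha : a ∈ Set.Icc (0:G) u)
    (hb : oplus u a a = a) :
    IsSummandIdealIn u (Set.Icc (0:G) u) (dsetIn (Set.Icc (0:G) u) a) := by
  obtain ⟨h1, h2, hbC, h4⟩ := bool_b hu ha hb
  set b := -a + u with hbdef
  have hu1 : u = a + b := (add_neg_cancel_left a u).symm
  have hu2 : u = b + a := by rw [hu1, h2]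
  have hnb : -b + u = a := by rw [hu2, neg_add_cancel_left]
  have hbbool : oplus u b b = b := by
    show (b + b) ⊓ u = b
    conv_lhs => rw [show u = b + (-b + u) from (add_neg_cancel_left b u).symm]
    rw [← add_inf, hnb, show b ⊓ a = 0 from (inf_comm a b) ▸ h1, add_zero]
  refine ⟨boolean_normal hu ha hb, dsetIn (Set.Icc (0:G) u) b,
    boolean_normal hu hbC hbbool, ?_, ?_⟩
  · ext z
    constructor
    · rintro ⟨⟨hzC, hza⟩, ⟨_, hzb⟩⟩
      have : z ≤ 0 := (le_inf hza hzb).trans_eq h1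
      exact le_antisymm this hzC.1
    · rintro rfl
      exact ⟨⟨⟨le_rfl, hu⟩, ha.1⟩, ⟨⟨le_rfl, hu⟩, hbC.1⟩⟩
  · apply Set.Subset.antisymm
    · exact Set.sInter_subset_of_mem ⟨icc_normal hu,
        Set.union_subset (fun x hx => hx.1) (fun x hx => hx.1)⟩
    · intro z hz
      refine Set.mem_sInter.mpr ?_
      rintro K ⟨⟨hKid, _⟩, hKsub⟩
      have haK : a ∈ K := hKsub (Or.inl ⟨ha, le_rfl⟩)
      have hbK : b ∈ K := hKsub (Or.inr ⟨hbC, le_rfl⟩)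
      have hoK : oplus u a b ∈ K := hKid.2.2.2 a haK b hbK
      have habu : oplus u a b = u := by
        show (a + b) ⊓ u = u
        rw [← hu1, inf_idem]
      exact hKid.2.2.1 _ (habu ▸ hoK) z hz hz.2

lemma normal_swap {u : G} {I : Set G}
    (hIn : ∀ x ∈ Set.Icc (0:G) u, (fun i => oplus u x i) '' I = (fun i => oplus u i x) '' I)
    {x : G} (hx : x ∈ Set.Icc (0:G) u) {c : G} (hc : c ∈ I) :
    (∃ c' ∈ I, oplus u x c = oplus u c' x) ∧ (∃ c'' ∈ I, oplus u c x = oplus u x c'') := by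
  constructor
  · have h : oplus u x c ∈ (fun i => oplus u x i) '' I := ⟨c, hc, rfl⟩
    rw [hIn x hx] at h
    obtain ⟨c', h1, h2⟩ := h
    exact ⟨c', h1, h2.symm⟩
  · have h : oplus u c x ∈ (fun i => oplus u i x) '' I := ⟨c, hc, rfl⟩
    rw [← hIn x hx] at h
    obtain ⟨c', h1, h2⟩ := h
    exact ⟨c', h1, h2.symm⟩

lemma summand_bool {u : G} (hu : 0 ≤ u) {A : Set G}
    (hs : IsSummandIdealIn u (Set.Icc (0:G) u) A) :
    ∃ a, a ∈ A ∧ IsBooleanIn u (Set.Icc (0:G) u) a ∧ A = dsetIn (Set.Icc (0:G) u) a := by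
  obtain ⟨⟨hAid, hAn⟩, J, ⟨hJid, hJn⟩, hdisj, hgen⟩ := hs
  obtain ⟨a0, ha0A⟩ := hAid.2.1
  obtain ⟨b0, hb0J⟩ := hJid.2.1
  have h0C : (0:G) ∈ Set.Icc (0:G) u := ⟨le_rfl, hu⟩
  have h0A : (0:G) ∈ A := hAid.2.2.1 a0 ha0A 0 h0C (hAid.1 ha0A).1
  have h0J : (0:G) ∈ J := hJid.2.2.1 b0 hb0J 0 h0C (hJid.1 hb0J).1
  set D := {z : G | z ∈ Set.Icc (0:G) u ∧ ∃ a ∈ A, ∃ b ∈ J, z ≤ oplus u a b} with hDdef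
  have shuffle1 : ∀ x ∈ Set.Icc (0:G) u, ∀ a ∈ A, ∀ b ∈ J,
      ∃ a' ∈ A, ∃ b' ∈ J, oplus u x (oplus u a b) = oplus u (oplus u a' b') x := by
    intro x hx a ha b hb
    obtain ⟨⟨a', ha', hea⟩, -⟩ := normal_swap hAn hx ha
    obtain ⟨⟨b', hb', heb⟩, -⟩ := normal_swap hJn hx hb
    have hbC := hJid.1 hb
    have ha'C := hAid.1 ha'
    refine ⟨a', ha', b', hb', ?_⟩
    calc oplus u x (oplus u a b) = (x + a + b) ⊓ u := oplus_assoc2 hx.1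
    _ = oplus u (oplus u x a) b := (oplus_assoc1 hbC.1).symm
    _ = oplus u (oplus u a' x) b := by rw [hea]
    _ = (a' + x + b) ⊓ u := oplus_assoc1 hbC.1
    _ = oplus u a' (oplus u x b) := (oplus_assoc2 ha'C.1).symm
    _ = oplus u a' (oplus u b' x) := by rw [heb]
    _ = (a' + b' + x) ⊓ u := oplus_assoc2 ha'C.1
    _ = oplus u (oplus u a' b') x := (oplus_assoc1 hx.1).symm
  have shuffle2 : ∀ x ∈ Set.Icc (0:G) u, ∀ a ∈ A, ∀ b ∈ J,
      ∃ a'' ∈ A, ∃ b'' ∈ J, oplus u (oplus u a b) x = oplus u x (oplus u a'' b'') := by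
    intro x hx a ha b hb
    obtain ⟨-, ⟨a'', ha'', hea⟩⟩ := normal_swap hAn hx ha
    obtain ⟨-, ⟨b'', hb'', heb⟩⟩ := normal_swap hJn hx hb
    have haC := hAid.1 ha
    have hb''C := hJid.1 hb''
    refine ⟨a'', ha'', b'', hb'', ?_⟩
    calc oplus u (oplus u a b) x = (a + b + x) ⊓ u := oplus_assoc1 hx.1
    _ = oplus u a (oplus u b x) := (oplus_assoc2 haC.1).symm
    _ = oplus u a (oplus u x b'') := by rw [heb]
    _ = (a + x + b'') ⊓ u := oplus_assoc2 haC.1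
    _ = oplus u (oplus u a x) b'' := (oplus_assoc1 hb''C.1).symm
    _ = oplus u (oplus u x a'') b'' := by rw [hea]
    _ = (x + a'' + b'') ⊓ u := oplus_assoc1 hb''C.1
    _ = oplus u x (oplus u a'' b'') := (oplus_assoc2 hx.1).symm
  have hDideal : IsIdealIn u (Set.Icc (0:G) u) D := by
    refine ⟨fun z hz => hz.1, ⟨0, h0C, 0, h0A, 0, h0J, oplus_nonneg hu le_rfl le_rfl⟩,
      fun z hz y hyC hyz => ⟨hyC, ?_⟩, ?_⟩
    · obtain ⟨-, a, ha, b, hb, hzab⟩ := hz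
      exact ⟨a, ha, b, hb, hyz.trans hzab⟩
    · rintro z1 ⟨hz1C, a1, ha1, b1, hb1, hz1⟩ z2 ⟨hz2C, a2, ha2, b2, hb2, hz2⟩
      obtain ⟨⟨a2', ha2', hea⟩, -⟩ := normal_swap hAn (hJid.1 hb1) ha2
      have ha1C := hAid.1 ha1
      have hb1C := hJid.1 hb1
      have ha2C := hAid.1 ha2
      have hb2C := hJid.1 hb2
      have ha2'C := hAid.1 ha2'
      have hW : 0 ≤ oplus u a2 b2 := oplus_nonneg hu ha2C.1 hb2C.1
      have hW2 : 0 ≤ oplus u b1 b2 := oplus_nonneg hu hb1C.1 hb2C.1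
      have key : oplus u (oplus u a1 b1) (oplus u a2 b2)
          = oplus u (oplus u a1 a2') (oplus u b1 b2) := by
        calc oplus u (oplus u a1 b1) (oplus u a2 b2)
            = (a1 + b1 + oplus u a2 b2) ⊓ u := oplus_assoc1 hW
        _ = oplus u a1 (oplus u b1 (oplus u a2 b2)) := (oplus_assoc2 ha1C.1).symm
        _ = oplus u a1 (oplus u a2' (oplus u b1 b2)) := by
            congr 1
            calc oplus u b1 (oplus u a2 b2) = (b1 + a2 + b2) ⊓ u := oplus_assoc2 hb1C.1
            _ = oplus u (oplus u b1 a2) b2 := (oplus_assoc1 hb2C.1).symm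
            _ = oplus u (oplus u a2' b1) b2 := by rw [hea]
            _ = (a2' + b1 + b2) ⊓ u := oplus_assoc1 hb2C.1
            _ = oplus u a2' (oplus u b1 b2) := (oplus_assoc2 ha2'C.1).symm
        _ = (a1 + a2' + oplus u b1 b2) ⊓ u := oplus_assoc2 ha1C.1
        _ = oplus u (oplus u a1 a2') (oplus u b1 b2) := (oplus_assoc1 hW2).symm
      refine ⟨oplus_mem hu hz1C.1 hz2C.1,
        oplus u a1 a2', hAid.2.2.2 a1 ha1 a2' ha2',
        oplus u b1 b2, hJid.2.2.2 b1 hb1 b2 hb2, ?_⟩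
      calc oplus u z1 z2 ≤ oplus u (oplus u a1 b1) (oplus u a2 b2) := oplus_mono hz1 hz2
      _ = _ := key
  have hDnorm : ∀ x ∈ Set.Icc (0:G) u,
      (fun i => oplus u x i) '' D = (fun i => oplus u i x) '' D := by
    intro x hx
    apply Set.Subset.antisymm
    · rintro w ⟨z, ⟨hzC, a, ha, b, hb, hzab⟩, rfl⟩
      set t := oplus u x z with ht
      have hxt : x ≤ t := le_inf (le_add_of_nonneg_right hzC.1) hx.2
      have htu : t ≤ u := inf_le_right
      obtain ⟨a', ha', b', hb', hshuf⟩ := shuffle1 x hx a ha b hb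
      set s := oplus u a' b' with hsdef
      have hsC : s ∈ Set.Icc (0:G) u := oplus_mem hu (hAid.1 ha').1 (hJid.1 hb').1
      have hts : t ≤ (s + x) ⊓ u := by
        have h1 : t ≤ oplus u x (oplus u a b) := oplus_mono le_rfl hzab
        rw [hshuf] at h1
        exact h1
      set d := (t - x) ⊔ 0 with hd
      have hd0 : (0:G) ≤ d := le_sup_right
      have hdu : d ≤ u := by
        refine sup_le ?_ hu
        have := add_le_add htu (neg_nonpos.mpr hx.1)
        simpa using this
      have hds : d ≤ s := sup_le (sub_le_iff_le_add.mpr (hts.trans inf_le_left)) hsC.1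
      refine ⟨d, ⟨⟨hd0, hdu⟩, a', ha', b', hb', hds⟩, ?_⟩
      show (d + x) ⊓ u = t
      rw [hd, sup_add, sub_add_cancel, zero_add, sup_eq_left.mpr hxt]
      exact inf_eq_left.mpr htu
    · rintro w ⟨z, ⟨hzC, a, ha, b, hb, hzab⟩, rfl⟩
      set t := oplus u z x with ht
      have hxt : x ≤ t := le_inf (le_add_of_nonneg_left hzC.1) hx.2
      have htu : t ≤ u := inf_le_right
      obtain ⟨a'', ha'', b'', hb'', hshuf⟩ := shuffle2 x hx a ha b hb
      set s := oplus u a'' b'' with hsdef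
      have hsC : s ∈ Set.Icc (0:G) u := oplus_mem hu (hAid.1 ha'').1 (hJid.1 hb'').1
      have hts : t ≤ (x + s) ⊓ u := by
        have h1 : t ≤ oplus u (oplus u a b) x := oplus_mono hzab le_rfl
        rw [hshuf] at h1
        exact h1
      set d := (-x + t) ⊔ 0 with hd
      have hd0 : (0:G) ≤ d := le_sup_right
      have hdu : d ≤ u := by
        refine sup_le ?_ hu
        have := add_le_add (neg_nonpos.mpr hx.1) htu
        simpa using this
      have hds : d ≤ s := by
        refine sup_le ?_ hsC.1
        have := add_le_add_left (hts.trans inf_le_left) (-x)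
        simpa [← add_assoc] using this
      refine ⟨d, ⟨⟨hd0, hdu⟩, a'', ha'', b'', hb'', hds⟩, ?_⟩
      show (x + d) ⊓ u = t
      rw [hd, add_sup, add_neg_cancel_left, add_zero, sup_eq_left.mpr hxt]
      exact inf_eq_left.mpr htu
  have hsub : A ∪ J ⊆ D := by
    rintro z (hz | hz)
    · exact ⟨hAid.1 hz, z, hz, 0, h0J,
        le_inf (le_of_eq (add_zero z).symm) (hAid.1 hz).2⟩
    · exact ⟨hJid.1 hz, 0, h0A, z, hz,
        le_inf (le_of_eq (zero_add z).symm) (hJid.1 hz).2⟩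
  have huD : u ∈ D := by
    have h : u ∈ normalGenIn u (Set.Icc (0:G) u) (A ∪ J) := by
      rw [hgen]; exact ⟨hu, le_rfl⟩
    exact Set.mem_sInter.mp h D ⟨⟨hDideal, hDnorm⟩, hsub⟩
  obtain ⟨-, a, haA, b, hbJ, hub⟩ := huD
  have haC := hAid.1 haA
  have hbC := hJid.1 hbJ
  have hba : u ≤ a + b := hub.trans inf_le_left
  have hab0 : a ⊓ b = 0 := by
    have memC : a ⊓ b ∈ Set.Icc (0:G) u :=
      ⟨le_inf haC.1 hbC.1, inf_le_left.trans haC.2⟩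
    have habm : a ⊓ b ∈ A ∩ J :=
      ⟨hAid.2.2.1 a haA _ memC inf_le_left, hJid.2.2.1 b hbJ _ memC inf_le_right⟩
    exact Set.mem_singleton_iff.mp (hdisj ▸ habm)
  have hbu2 : -a + u ≤ b := by
    have := add_le_add_left hba (-a)
    simpa [← add_assoc] using this
  have h1 : a ⊓ (-a + u) = 0 :=
    le_antisymm ((inf_le_inf_left a hbu2).trans hab0.le)
      (le_inf haC.1 (by simpa using add_le_add_left haC.2 (-a)))
  have habool : oplus u a a = a := by
    show (a + a) ⊓ u = a
    conv_lhs => rw [show u = a + (-a + u) from (add_neg_cancel_left a u).symm]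
    rw [← add_inf, h1, add_zero]
  have hAeq : A = dsetIn (Set.Icc (0:G) u) a := by
    ext x
    constructor
    · intro hx
      have hxC := hAid.1 hx
      refine ⟨hxC, ?_⟩
      set x2 := 0 ⊔ (-a + x) with hx2
      have hx2x : x2 ≤ x :=
        sup_le hxC.1 (by simpa using add_le_add_right (neg_nonpos.mpr haC.1) x)
      have hx2b : x2 ≤ b := sup_le hbC.1 ((add_le_add (le_refl (-a)) hxC.2).trans hbu2)
      have hx2C : x2 ∈ Set.Icc (0:G) u := ⟨le_sup_left, hx2x.trans hxC.2⟩
      have hx2AJ : x2 ∈ A ∩ J :=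
        ⟨hAid.2.2.1 x hx x2 hx2C hx2x, hJid.2.2.1 b hbJ x2 hx2C hx2b⟩
      have hx20 : x2 = 0 := Set.mem_singleton_iff.mp (hdisj ▸ hx2AJ)
      have hle : -a + x ≤ 0 := le_sup_right.trans_eq hx20
      have := add_le_add_left hle a
      simpa using this
    · rintro ⟨hxC, hxa⟩
      exact hAid.2.2.1 a haA x hxC hxa
  exact ⟨a, haA, ⟨haC, habool⟩, hAeq⟩

theorem stmt9 (u : G) (hu : IsStrongUnit u) (A : Set G)
    (hA : A ⊆ Set.Icc (0 : G) u) (hne : A.Nonempty) :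
    (IsSummandIdealIn u (Set.Icc (0 : G) u) A ↔
      ∃ a : G, IsBooleanIn u (Set.Icc (0 : G) u) a ∧ A = dsetIn (Set.Icc (0 : G) u) a) ∧
    (IsSummandIdealIn u (Set.Icc (0 : G) u) A →
      ∃! a : G, a ∈ A ∧ IsBooleanIn u (Set.Icc (0 : G) u) a ∧ A = dsetIn (Set.Icc (0 : G) u) a ∧
        polarIn (Set.Icc (0 : G) u) A = dsetIn (Set.Icc (0 : G) u) (u - a)) := by
  have hu0 : 0 ≤ u := hu.1
  constructor
  · constructor
    · intro hs
      obtain ⟨a, haA, hbool, heq⟩ := summand_bool hu0 hs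
      exact ⟨a, hbool, heq⟩
    · rintro ⟨a, ⟨haC, habool⟩, rfl⟩
      exact bool_summand hu0 haC habool
  · intro hs
    obtain ⟨a, haA, ⟨haC, habool⟩, heq⟩ := summand_bool hu0 hs
    refine ⟨a, ⟨haA, ⟨haC, habool⟩, heq, ?_⟩, ?_⟩
    · rw [heq]
      exact polar_eq hu0 haC habool
    · rintro a' ⟨ha'A, -, heq', -⟩
      have h1 : a' ≤ a := (heq ▸ ha'A).2
      have h2 : a ≤ a' := (heq' ▸ haA).2
      exact le_antisymm h1 h2
end
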